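/- arXiv:2301.05288 — 5 statements merged into one kernel-verified Lean document; each statement's English description precedes it below -/
import Mathlib

section
/- Suppose c > 24 and α₁, α₂ ∈ [0,1] satisfy 0.2α₁ + 0.8α₂ = 1/3, and set q₋₁ = 0.8α₁ + 0.2α₂. Then for all q̃₋₁, q̃₁ ∈ [0,1] with χ(q̃₋₁) = χ(q₋₁), one has rA(0, 1, q̃₋₁, q̃₁) > rA(α₁, α₂, q₋₁, 1/3). That is, when the Bayes-consistent belief after common observation z = 1 equals the threshold value 1/3, Alice's deviation to the pure strategy (α₁, α₂) = (0, 1) strictly improves her payoff, uniformly over nearby beliefs. -/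
/-- The threshold function χ(q) = 1 if q ≤ 1/3 and 0 otherwise. -/
noncomputable def chi (q : ℝ) : ℝ := if q ≤ 1/3 then 1 else 0

/-- Alice's payoff in the augmented stage-game (p = 0.2). -/
noncomputable def rA (c α₁ α₂ qm qp : ℝ) : ℝ :=
  0.5 * c * (1 - α₁ + α₂) + 0.5 * (2 - α₁ - α₂)
    + 0.5 * (3 * (0.8 * α₁ + 0.2 * α₂) - 1) * chi qm
    + 0.5 * (3 * (0.2 * α₁ + 0.8 * α₂) - 1) * chi qp

/-- If c > 24 and the Bayes-consistent belief after z = 1 equals 1/3, Alice's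
deviation to (0,1) strictly improves her payoff, uniformly over nearby beliefs. -/
theorem deviation_improves_zp (c α₁ α₂ : ℝ) (hc : 24 < c)
    (h₁ : α₁ ∈ Set.Icc (0:ℝ) 1) (h₂ : α₂ ∈ Set.Icc (0:ℝ) 1)
    (hq : 0.2 * α₁ + 0.8 * α₂ = 1/3) :
    ∀ qm' ∈ Set.Icc (0:ℝ) 1, ∀ qp' ∈ Set.Icc (0:ℝ) 1,
      chi qm' = chi (0.8 * α₁ + 0.2 * α₂) →
      rA c 0 1 qm' qp' > rA c α₁ α₂ (0.8 * α₁ + 0.2 * α₂) (1/3) := by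
  intro qm' _ qp' _ hchi
  have hd : chi (1/3) = 1 := by simp [chi]
  have ha : chi qm' = 0 ∨ chi qm' = 1 := by unfold chi; split <;> simp
  have hb : chi qp' = 0 ∨ chi qp' = 1 := by unfold chi; split <;> simp
  unfold rA
  rw [hd, ← hchi]
  rcases ha with h | h <;> rcases hb with h' | h' <;> rw [h, h'] <;>
    nlinarith [h₁.1, h₁.2, h₂.1, h₂.2]
end

section
/- Suppose c > 24. Then for all q̃₋₁, q̃₁ ∈ [0,1], one has rA(0, 1, q̃₋₁, q̃₁) > rA(1/3, 1/3, 1/3, 1/3). That is, at the unique strategy (α₁, α₂) = (1/3, 1/3) whose Bayes-consistent beliefs after both common observations equal the threshold value 1/3, Alice's deviation to the pure strategy (0, 1) strictly improves her payoff, uniformly over all beliefs. -/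
lemma chi_bounds (q : ℝ) : 0 ≤ chi q ∧ chi q ≤ 1 := by
  unfold chi; split <;> norm_num

/-- If c > 24, Alice's deviation from (1/3, 1/3) (whose Bayes-consistent beliefs
both equal 1/3) to the pure strategy (0,1) strictly improves her payoff,
uniformly over all beliefs. -/
theorem deviation_improves_both (c : ℝ) (hc : 24 < c) :
    ∀ qm' ∈ Set.Icc (0:ℝ) 1, ∀ qp' ∈ Set.Icc (0:ℝ) 1,
      rA c 0 1 qm' qp' > rA c (1/3) (1/3) (1/3) (1/3) := by
  intro qm _ qp _
  obtain ⟨h1, h2⟩ := chi_bounds qm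
  obtain ⟨h3, h4⟩ := chi_bounds qp
  have : chi (1/3 : ℝ) = 1 := by unfold chi; norm_num
  unfold rA
  rw [this]
  nlinarith
end

section
/- If c > 24, then there exist α₁, α₂ ∈ [0,1] such that, with q₋₁ = 0.8α₁ + 0.2α₂ and q₁ = 0.2α₁ + 0.8α₂, the value α₁ maximizes a ↦ rA₋(a, q₋₁, q₁) over [0,1] and the value α₂ maximizes a ↦ rA₊(a, q₋₁, q₁) over [0,1]. (Existence of a sufficient-information-based Bayesian Nash equilibrium strategy at stage 1 of the two-stage example with hidden actions.) -/
/-- Alice's expected stage-1 payoff conditional on initial state −1 (p = 0.2). -/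
noncomputable def rAm (c α qm qp : ℝ) : ℝ :=
  (1 + c) * (1 - α) + (3 * α - 1) * (0.8 * chi qm + 0.2 * chi qp)

/-- Alice's expected stage-1 payoff conditional on initial state +1 (p = 0.2). -/
noncomputable def rAp (c α qm qp : ℝ) : ℝ :=
  1 + (c - 1) * α + (3 * α - 1) * (0.8 * chi qp + 0.2 * chi qm)

/-- If c > 24, there exists a SIB-BNE strategy at stage 1: α₁, α₂ ∈ [0,1] such
that, with the Bayes-consistent beliefs q₋₁ = 0.8α₁+0.2α₂ and q₁ = 0.2α₁+0.8α₂,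
α₁ maximizes rA₋(·, q₋₁, q₁) over [0,1] and α₂ maximizes rA₊(·, q₋₁, q₁) over [0,1]. -/
theorem sib_bne_exists (c : ℝ) (hc : 24 < c) :
    ∃ α₁ ∈ Set.Icc (0:ℝ) 1, ∃ α₂ ∈ Set.Icc (0:ℝ) 1,
      (∀ a ∈ Set.Icc (0:ℝ) 1,
        rAm c a (0.8 * α₁ + 0.2 * α₂) (0.2 * α₁ + 0.8 * α₂) ≤
        rAm c α₁ (0.8 * α₁ + 0.2 * α₂) (0.2 * α₁ + 0.8 * α₂)) ∧
      (∀ a ∈ Set.Icc (0:ℝ) 1,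
        rAp c a (0.8 * α₁ + 0.2 * α₂) (0.2 * α₁ + 0.8 * α₂) ≤
        rAp c α₂ (0.8 * α₁ + 0.2 * α₂) (0.2 * α₁ + 0.8 * α₂)) := by
  refine ⟨0, by norm_num, 1, by norm_num, ?_, ?_⟩ <;>
  · intro a ⟨ha0, ha1⟩
    simp only [rAm, rAp, chi]
    norm_num
    nlinarith
end

section
/- If c > 24, then there exist α₁, α₂, q₋₁, q₁ ∈ [0,1] such that rA(α₁, α₂, q₋₁, q₁) ≥ rA(α₁', α₂', q₋₁, q₁) for all α₁', α₂' ∈ [0,1], and r0(α₁, α₂, q₋₁, q₁) ≥ r0(α₁, α₂, q₋₁', q₁') for all q₋₁', q₁' ∈ [0,1]. (Existence of a Nash equilibrium of the augmented stage-game Ĝ₁ between Alice and the belief-selecting agent 0.) -/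
/-- Agent 0's utility in the augmented stage-game (p = 0.2). -/
noncomputable def r0 (α₁ α₂ qm qp : ℝ) : ℝ :=
  -(qm - 0.8 * α₁ - 0.2 * α₂)^2 - (qp - 0.2 * α₁ - 0.8 * α₂)^2

/-- If c > 24, the augmented stage-game Ĝ₁ between Alice and the
belief-selecting agent 0 has a Nash equilibrium. -/
theorem augmented_game_nash_exists (c : ℝ) (hc : 24 < c) :
    ∃ α₁ ∈ Set.Icc (0:ℝ) 1, ∃ α₂ ∈ Set.Icc (0:ℝ) 1,
    ∃ qm ∈ Set.Icc (0:ℝ) 1, ∃ qp ∈ Set.Icc (0:ℝ) 1,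
      (∀ α₁' ∈ Set.Icc (0:ℝ) 1, ∀ α₂' ∈ Set.Icc (0:ℝ) 1,
        rA c α₁' α₂' qm qp ≤ rA c α₁ α₂ qm qp) ∧
      (∀ qm' ∈ Set.Icc (0:ℝ) 1, ∀ qp' ∈ Set.Icc (0:ℝ) 1,
        r0 α₁ α₂ qm' qp' ≤ r0 α₁ α₂ qm qp) := by
  have hchi1 : chi 0.2 = 1 := by norm_num [chi]
  have hchi0 : chi 0.8 = 0 := by norm_num [chi]
  refine ⟨0, by norm_num, 1, by norm_num, 0.2, by norm_num, 0.8, by norm_num, ?_, ?_⟩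
  · intro a ⟨ha0, ha1⟩ b ⟨hb0, hb1⟩
    simp only [rA, hchi1, hchi0]
    nlinarith
  · intro qm ⟨_, _⟩ qp ⟨_, _⟩
    simp only [r0]
    nlinarith [sq_nonneg (qm - 0.2), sq_nonneg (qp - 0.8)]
end

section
/- Suppose α₁, α₂, q₋₁, q₁ ∈ [0,1] form a Nash equilibrium of the augmented stage-game, i.e. rA(α₁, α₂, q₋₁, q₁) ≥ rA(α₁', α₂', q₋₁, q₁) for all α₁', α₂' ∈ [0,1] and r0(α₁, α₂, q₋₁, q₁) ≥ r0(α₁, α₂, q₋₁', q₁') for all q₋₁', q₁' ∈ [0,1]. Then q₋₁ = 0.8α₁ + 0.2α₂, q₁ = 0.2α₁ + 0.8α₂, α₁ maximizes a ↦ rA₋(a, q₋₁, q₁) over [0,1], and α₂ maximizes a ↦ rA₊(a, q₋₁, q₁) over [0,1]. -/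
/-- Any Nash equilibrium of the augmented stage-game has Bayes-consistent beliefs,
and Alice's components separately maximize rA₋ and rA₊ over [0,1]. -/
theorem nash_gives_sib_bne (c α₁ α₂ qm qp : ℝ)
    (h₁ : α₁ ∈ Set.Icc (0:ℝ) 1) (h₂ : α₂ ∈ Set.Icc (0:ℝ) 1)
    (hqm : qm ∈ Set.Icc (0:ℝ) 1) (hqp : qp ∈ Set.Icc (0:ℝ) 1)
    (hA : ∀ α₁' ∈ Set.Icc (0:ℝ) 1, ∀ α₂' ∈ Set.Icc (0:ℝ) 1,
      rA c α₁' α₂' qm qp ≤ rA c α₁ α₂ qm qp)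
    (h0 : ∀ qm' ∈ Set.Icc (0:ℝ) 1, ∀ qp' ∈ Set.Icc (0:ℝ) 1,
      r0 α₁ α₂ qm' qp' ≤ r0 α₁ α₂ qm qp) :
    qm = 0.8 * α₁ + 0.2 * α₂ ∧ qp = 0.2 * α₁ + 0.8 * α₂ ∧
    (∀ a ∈ Set.Icc (0:ℝ) 1, rAm c a qm qp ≤ rAm c α₁ qm qp) ∧
    (∀ a ∈ Set.Icc (0:ℝ) 1, rAp c a qm qp ≤ rAp c α₂ qm qp) := by
  obtain ⟨ha1, hb1⟩ := h₁
  obtain ⟨ha2, hb2⟩ := h₂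
  have hm : (0.8 * α₁ + 0.2 * α₂ : ℝ) ∈ Set.Icc (0:ℝ) 1 := ⟨by nlinarith, by nlinarith⟩
  have hp : (0.2 * α₁ + 0.8 * α₂ : ℝ) ∈ Set.Icc (0:ℝ) 1 := ⟨by nlinarith, by nlinarith⟩
  have key := h0 _ hm _ hp
  simp only [r0] at key
  have hqm' : qm = 0.8 * α₁ + 0.2 * α₂ := by nlinarith [sq_nonneg (qm - 0.8 * α₁ - 0.2 * α₂), sq_nonneg (qp - 0.2 * α₁ - 0.8 * α₂)]
  have hqp' : qp = 0.2 * α₁ + 0.8 * α₂ := by nlinarith [sq_nonneg (qm - 0.8 * α₁ - 0.2 * α₂), sq_nonneg (qp - 0.2 * α₁ - 0.8 * α₂)]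
  have hsum : ∀ a b : ℝ, rA c a b qm qp = 0.5 * (rAm c a qm qp + rAp c b qm qp) := by
    intro a b; simp only [rA, rAm, rAp]; ring
  refine ⟨hqm', hqp', ?_, ?_⟩
  · intro a ha
    have := hA a ha α₂ ⟨ha2, hb2⟩
    rw [hsum, hsum] at this
    linarith
  · intro a ha
    have := hA α₁ ⟨ha1, hb1⟩ a ha
    rw [hsum, hsum] at this
    linarith
end
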